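/- If G is a group isomorphic to a direct product A × F where A is a finite abelian group and F is a free group, and φ: A × F → G' is a surjective group homomorphism with kernel contained in A × {1}, and there exists an injective group homomorphism from A into G', then φ is an isomorphism. -/

import Mathlib

namespace FGTorsion

open FreeGroup List

variable {α : Type*} [DecidableEq α]

def R (a b : α × Bool) : Prop := ¬(a.1 = b.1 ∧ a.2 = !b.2)

lemma reduce_eq_self_of_chain' {L : List (α × Bool)} (h : List.Chain' R L) :
    FreeGroup.reduce L = L := by
  induction L with
  | nil => rfl
  | cons a L ih =>
    rw [FreeGroup.reduce.cons, ih h.tail]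
    cases L with
    | nil => rfl
    | cons b t =>
      have hr : R a b := (List.isChain_cons_cons.mp h).1
      simp only [R] at hr
      simp [hr]

lemma chain'_of_reduce_eq_self : ∀ {L : List (α × Bool)},
    FreeGroup.reduce L = L → List.Chain' R L := by
  intro L
  induction L with
  | nil => exact fun _ => List.isChain_nil
  | cons a L ih =>
    intro h
    rw [FreeGroup.reduce.cons] at h
    rcases hL : FreeGroup.reduce L with _ | ⟨b, t⟩
    · rw [hL] at h
      have : L = [] := by simpa using h.symm
      subst this; exact List.isChain_singleton _
    · rw [hL] at h
      dsimp only at h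
      by_cases hc : a.1 = b.1 ∧ a.2 = !b.2
      · rw [if_pos hc] at h
        exfalso
        have h1 : (FreeGroup.reduce L).length ≤ L.length :=
          FreeGroup.Red.length_le (FreeGroup.reduce.red)
        rw [hL] at h1
        have : t.length = L.length + 1 := by rw [h]; simp
        simp [this] at h1
      · rw [if_neg hc] at h
        have hL' : L = b :: t := by simpa using h.symm
        subst hL'
        exact List.isChain_cons_cons.mpr ⟨hc, ih hL⟩

lemma chain'_flatten_replicate {L : List (α × Bool)} (hc : List.Chain' R L)
    (hj : ∀ x ∈ L.getLast?, ∀ y ∈ L.head?, R x y) (n : ℕ) :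
    List.Chain' R (List.flatten (List.replicate n L)) ∧
      (List.flatten (List.replicate n L)).head? = (if n = 0 then none else L.head?) := by
  induction n with
  | zero => simp; exact List.isChain_nil
  | succ n ih =>
    rw [List.replicate_succ, List.flatten_cons]
    rcases eq_or_ne L [] with rfl | hne
    · simpa using ih
    constructor
    · refine List.isChain_append.mpr ⟨hc, ih.1, ?_⟩
      intro x hx y hy
      rw [ih.2] at hy
      split at hy
      · simp at hy
      · exact hj x hx y hy
    · rw [List.head?_append_of_ne_nil _ hne]
      simp [hne]


lemma eq_one_of_pow_eq_one_aux : ∀ (N : ℕ) (x : FreeGroup α), x.norm ≤ N →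
    ∀ n : ℕ, n ≠ 0 → x ^ n = 1 → x = 1 := by
  intro N
  induction N with
  | zero =>
    intro x hx n _ _
    exact FreeGroup.norm_eq_zero.mp (Nat.le_zero.mp hx)
  | succ N ih =>
    intro x hx n hn hpow
    obtain ⟨L, hLdef⟩ : ∃ L, x.toWord = L := ⟨_, rfl⟩
    have hxL : x = FreeGroup.mk L := by rw [← hLdef, FreeGroup.mk_toWord]
    have hnormx : x.norm = L.length := by rw [FreeGroup.norm, hLdef]
    have hred : FreeGroup.reduce L = L := by rw [← hLdef]; exact FreeGroup.reduce_toWord x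
    have hc : List.Chain' R L := chain'_of_reduce_eq_self hred
    by_cases hj : ∀ p ∈ L.getLast?, ∀ q ∈ L.head?, R p q
    · -- cyclically reduced case
      have hflat := chain'_flatten_replicate hc hj n
      have hx1 : x ^ n = FreeGroup.mk (List.flatten (List.replicate n L)) := by
        rw [hxL, FreeGroup.pow_mk]
      rw [hx1, FreeGroup.one_eq_mk] at hpow
      have hred0 := FreeGroup.reduce.sound hpow
      rw [reduce_eq_self_of_chain' hflat.1, FreeGroup.reduce_nil] at hred0
      have hL0 : L = [] := by
        rcases n with _ | m
        · exact absurd rfl hn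
        · rw [List.replicate_succ, List.flatten_cons] at hred0
          exact (List.append_eq_nil_iff.mp hred0).1
      rw [hxL, hL0, ← FreeGroup.one_eq_mk]
    · -- not cyclically reduced: conjugate down
      push_neg at hj
      obtain ⟨p, hp, q, hq, hpq⟩ := hj
      simp only [R, not_not] at hpq
      rcases L with _ | ⟨a0, L'⟩
      · simp at hq
      have ha0 : a0 = q := by simpa using hq
      rcases List.eq_nil_or_concat L' with rfl | ⟨M, p', rfl⟩
      · have : a0 = p := by simpa using hp
        rw [ha0] at this
        rw [← this] at hpq
        simp at hpq
      have hp' : p' = p := by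
        have h1 : (a0 :: List.concat M p').getLast? = some p' := by
          rw [List.concat_eq_append, ← List.cons_append]
          exact List.getLast?_concat
        rw [h1] at hp
        exact Option.some_inj.mp hp
      -- x = q * mk M * q⁻¹ essentially
      have hxfac : x = FreeGroup.mk [a0] * FreeGroup.mk M * FreeGroup.mk [p'] := by
        rw [hxL, FreeGroup.mul_mk, FreeGroup.mul_mk, List.concat_eq_append]
        rfl
      have hqp : FreeGroup.mk [p'] = (FreeGroup.mk [a0])⁻¹ := by
        rw [FreeGroup.inv_mk]
        congr 1
        have hpe : p' = (a0.1, !a0.2) := by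
          rw [hp', ha0]
          obtain ⟨h1, h2⟩ := hpq
          exact Prod.ext h1 h2
        rw [hpe]
        simp [FreeGroup.invRev]
      set u := FreeGroup.mk [a0]
      have hxc : x = u * FreeGroup.mk M * u⁻¹ := by rw [hxfac, hqp]
      have hm : (FreeGroup.mk M) ^ n = 1 := by
        have h2 : x ^ n = u * (FreeGroup.mk M) ^ n * u⁻¹ := by
          rw [hxc, conj_pow]
        rw [hpow] at h2
        have h3 := h2.symm
        rwa [mul_inv_eq_one, ← eq_inv_mul_iff_mul_eq, inv_mul_cancel] at h3
      have hnorm : (FreeGroup.mk M).norm ≤ N := by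
        have h1 : (FreeGroup.mk M).norm ≤ M.length := FreeGroup.norm_mk_le
        have h2 : (a0 :: M.concat p').length = M.length + 2 := by simp
        omega
      have hM1 := ih (FreeGroup.mk M) hnorm n hn hm
      rw [hxc, hM1]
      simp

lemma freeGroup_eq_one_of_pow_eq_one {x : FreeGroup α} {n : ℕ} (hn : n ≠ 0)
    (h : x ^ n = 1) : x = 1 :=
  eq_one_of_pow_eq_one_aux x.norm x le_rfl n hn h

end FGTorsion

/-- If `φ : A × F → G'` is a surjective group homomorphism, where `A` is a
finite abelian group and `F` is a free group (of finite rank), with `ker φ ⊆ A × {1}`,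
and `A` injects into `G'`, then `φ` is an isomorphism. -/
theorem stmt_1 {A : Type*} [CommGroup A] [Finite A] {σ : Type*} [Finite σ]
    {G' : Type*} [Group G'] (φ : A × FreeGroup σ →* G')
    (hsurj : Function.Surjective φ)
    (hker : φ.ker ≤ (⊤ : Subgroup A).prod (⊥ : Subgroup (FreeGroup σ)))
    (ψ : A →* G') (hψ : Function.Injective ψ) :
    Function.Bijective φ := by
  classical
  set h : A →* G' := φ.comp (MonoidHom.inl A (FreeGroup σ)) with hh
  have hcardA : 0 < Nat.card A := Nat.card_pos
  -- every ψ a lands in h.range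
  have key : ∀ a : A, ψ a ∈ h.range := by
    intro a
    obtain ⟨x, hx⟩ := hsurj (ψ a)
    have hxn : x ^ (Nat.card A) ∈ φ.ker := by
      rw [MonoidHom.mem_ker, map_pow, hx, ← map_pow, pow_card_eq_one', map_one]
    have h2 : x.2 ^ Nat.card A = 1 := by
      have h3 := hker hxn
      rw [Subgroup.mem_prod] at h3
      simpa using h3.2
    have hx2 : x.2 = 1 := FGTorsion.freeGroup_eq_one_of_pow_eq_one hcardA.ne' h2
    refine ⟨x.1, ?_⟩
    have : x = (x.1, (1 : FreeGroup σ)) := by rw [← hx2]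
    rw [hh]
    simp only [MonoidHom.comp_apply, MonoidHom.inl_apply]
    rw [← this, hx]
  have hinj : Function.Injective (fun a : A => (⟨ψ a, key a⟩ : h.range)) := by
    intro a b hab
    exact hψ (congrArg Subtype.val hab)
  have hfinq : Finite (A ⧸ h.ker) := Quotient.finite _
  have hfinr : Finite h.range :=
    Finite.of_equiv _ (QuotientGroup.quotientKerEquivRange h).toEquiv
  have hcard : Nat.card A ≤ Nat.card h.range := Nat.card_le_card_of_injective _ hinj
  have hq : Nat.card A = Nat.card (A ⧸ h.ker) * Nat.card h.ker :=
    Subgroup.card_eq_card_quotient_mul_card_subgroup h.ker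
  have hre : Nat.card h.range = Nat.card (A ⧸ h.ker) :=
    Nat.card_congr (QuotientGroup.quotientKerEquivRange h).symm.toEquiv
  have hkerpos : 0 < Nat.card h.ker := Nat.card_pos
  have hker1 : Nat.card h.ker = 1 := by nlinarith [hcard, hq, hre, hkerpos, hcardA]
  have hkbot : h.ker = ⊥ := Subgroup.eq_bot_of_card_eq _ hker1
  have hφker : φ.ker = ⊥ := by
    rw [eq_bot_iff]
    intro z hz
    have h3 := hker hz
    rw [Subgroup.mem_prod] at h3
    have hz2 : z.2 = 1 := h3.2
    have hz1 : z.1 ∈ h.ker := by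
      rw [MonoidHom.mem_ker, hh]
      simp only [MonoidHom.comp_apply, MonoidHom.inl_apply]
      have : ((z.1, (1 : FreeGroup σ)) : A × FreeGroup σ) = z := by rw [← hz2]
      rw [this]
      exact hz
    rw [hkbot, Subgroup.mem_bot] at hz1
    have : z = 1 := Prod.ext hz1 hz2
    simp [this]
  exact ⟨(MonoidHom.ker_eq_bot_iff φ).mp hφker, hsurj⟩
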